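/- Let Φ be a crystallographic root system. If R and S are Φ-posets (antisymmetric closed subsets of Φ), then their meet ncd( cl(R⁺ ∪ S⁺) ⊔ (R⁻ ∩ S⁻) ) and join pcd( (R⁺ ∩ S⁺) ⊔ cl(R⁻ ∪ S⁻) ) in the lattice of closed subsets are again antisymmetric. Hence the Φ-posets form a sublattice of the weak order on closed subsets of Φ. -/

import Mathlib

open Pointwise

structure RootSys (V : Type*) [NormedAddCommGroup V] [InnerProductSpace ℝ V] where
  Φ : Set V
  finite : Φ.Finite
  nonzero : ∀ α ∈ Φ, α ≠ (0 : V)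
  line : ∀ α ∈ Φ, Φ ∩ {x : V | ∃ t : ℝ, x = t • α} = {α, -α}
  reflect : ∀ α ∈ Φ, ∀ β ∈ Φ, β - (2 * (inner ℝ α β : ℝ) / (inner ℝ α α : ℝ)) • α ∈ Φ

variable {V : Type*} [NormedAddCommGroup V] [InnerProductSpace ℝ V]

/-- `Φ` is crystallographic: `⟨α^∨, β⟩ ∈ ℤ` for all roots `α, β`. -/
def RootSys.IsCrystallographic (R : RootSys V) : Prop :=
  ∀ α ∈ R.Φ, ∀ β ∈ R.Φ, ∃ n : ℤ, 2 * (inner ℝ α β : ℝ) / (inner ℝ α α : ℝ) = (n : ℝ)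

/-- A subset `S ⊆ Φ` is closed if it is stable under sums of two elements staying in `Φ`. -/
def RootSys.IsClosedSubset (R : RootSys V) (S : Set V) : Prop :=
  ∀ α ∈ S, ∀ β ∈ S, α + β ∈ R.Φ → α + β ∈ S

/-- A set of roots is antisymmetric if it never contains both `α` and `-α`. -/
def IsAntisymSet (S : Set V) : Prop := ∀ α ∈ S, -α ∉ S

/-- A `Φ`-poset: an antisymmetric closed subset of `Φ`. -/
def RootSys.IsPoset (R : RootSys V) (S : Set V) : Prop :=
  S ⊆ R.Φ ∧ IsAntisymSet S ∧ R.IsClosedSubset S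

/-- Closure: roots that are nonnegative integer combinations (multiset sums) of elements of `T`. -/
def RootSys.clos (R : RootSys V) (T : Set V) : Set V :=
  {γ ∈ R.Φ | ∃ M : Multiset V, (∀ x ∈ M, x ∈ T) ∧ M.sum = γ}

/-- Nonnegative integer combinations (multiset sums) of elements of `T`. -/
def nncomb (T : Set V) : Set V :=
  {v | ∃ M : Multiset V, (∀ x ∈ M, x ∈ T) ∧ M.sum = v}

/-- A root system equipped with a generic linear functional determining positive roots. -/
structure PosRootSys (V : Type*) [NormedAddCommGroup V] [InnerProductSpace ℝ V]
    extends RootSys V where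
  f : V →ₗ[ℝ] ℝ
  generic : ∀ α ∈ Φ, f α ≠ 0

def PosRootSys.Pos (P : PosRootSys V) : Set V := {α ∈ P.Φ | 0 < P.f α}

def PosRootSys.Neg (P : PosRootSys V) : Set V := {α ∈ P.Φ | P.f α < 0}

/-- The weak order: `R ≼ S` iff `R⁺ ⊇ S⁺` and `R⁻ ⊆ S⁻`. -/
def PosRootSys.wle (P : PosRootSys V) (R S : Set V) : Prop :=
  S ∩ P.Pos ⊆ R ∩ P.Pos ∧ R ∩ P.Neg ⊆ S ∩ P.Neg

/-- `R` is semiclosed if both `R⁺` and `R⁻` are closed. -/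
def PosRootSys.SemiClosed (P : PosRootSys V) (S : Set V) : Prop :=
  S ⊆ P.Φ ∧ P.toRootSys.IsClosedSubset (S ∩ P.Pos) ∧
    P.toRootSys.IsClosedSubset (S ∩ P.Neg)

/-- Negative closure deletion. -/
def PosRootSys.ncd (P : PosRootSys V) (S : Set V) : Set V :=
  S \ {α | α ∈ S ∩ P.Neg ∧ ∃ X : Finset V, ↑X ⊆ S ∩ P.Pos ∧ α + X.sum id ∈ P.Φ \ S}

/-- Positive closure deletion. -/
def PosRootSys.pcd (P : PosRootSys V) (S : Set V) : Set V :=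
  S \ {α | α ∈ S ∩ P.Pos ∧ ∃ X : Finset V, ↑X ⊆ S ∩ P.Neg ∧ α + X.sum id ∈ P.Φ \ S}

/-- Meet formula on closed subsets. -/
def PosRootSys.wmeet (P : PosRootSys V) (R S : Set V) : Set V :=
  P.ncd (P.toRootSys.clos ((R ∪ S) ∩ P.Pos) ∪ ((R ∩ S) ∩ P.Neg))

/-- Join formula on closed subsets. -/
def PosRootSys.wjoin (P : PosRootSys V) (R S : Set V) : Set V :=
  P.pcd (((R ∩ S) ∩ P.Pos) ∪ P.toRootSys.clos ((R ∪ S) ∩ P.Neg))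

lemma RootSys.neg_mem (Rt : RootSys V) {α : V} (h : α ∈ Rt.Φ) : -α ∈ Rt.Φ := by
  have hl := Rt.line α h
  have hmem : (-α : V) ∈ Rt.Φ ∩ {x : V | ∃ t : ℝ, x = t • α} := by
    rw [hl]; right; rfl
  exact hmem.1

lemma RootSys.sub_mem (Rt : RootSys V) (hcr : Rt.IsCrystallographic)
    {α β : V} (hα : α ∈ Rt.Φ) (hβ : β ∈ Rt.Φ)
    (hpos : 0 < (inner ℝ α β : ℝ)) (hne : α ≠ β) : α - β ∈ Rt.Φ := by
  have ha : 0 < (inner ℝ α α : ℝ) :=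
    lt_of_le_of_ne real_inner_self_nonneg (Ne.symm (inner_self_ne_zero.2 (Rt.nonzero α hα)))
  have hb : 0 < (inner ℝ β β : ℝ) :=
    lt_of_le_of_ne real_inner_self_nonneg (Ne.symm (inner_self_ne_zero.2 (Rt.nonzero β hβ)))
  obtain ⟨n, hn⟩ := hcr α hα β hβ
  obtain ⟨m, hm⟩ := hcr β hβ α hα
  rw [real_inner_comm α β] at hm
  have hnpos : (0:ℝ) < n := by rw [← hn]; positivity
  have hmpos : (0:ℝ) < m := by rw [← hm]; positivity
  have hn1 : 1 ≤ n := by exact_mod_cast hnpos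
  have hm1 : 1 ≤ m := by exact_mod_cast hmpos
  have hcs : (inner ℝ α β : ℝ) * inner ℝ α β ≤ inner ℝ α α * inner ℝ β β :=
    real_inner_mul_inner_self_le α β
  have hnm4 : (n:ℝ) * m ≤ 4 := by
    rw [← hn, ← hm]
    rw [div_mul_div_comm, div_le_iff₀ (by positivity)]
    nlinarith
  have hnm4' : n * m ≤ 4 := by exact_mod_cast hnm4
  by_cases heq : n * m = 4
  · -- equality case: α and β are parallel, contradiction
    exfalso
    have hc2 : (inner ℝ α β : ℝ) * inner ℝ α β = inner ℝ α α * inner ℝ β β := by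
      have : (n:ℝ) * m = 4 := by exact_mod_cast heq
      rw [← hn, ← hm, div_mul_div_comm, div_eq_iff (by positivity)] at this
      nlinarith
    -- w := (inner ℝ α α) • β - (inner ℝ α β) • α has zero norm
    have hw : ((inner ℝ α α : ℝ) • β - (inner ℝ α β : ℝ) • α) = 0 := by
      have : (inner ℝ ((inner ℝ α α : ℝ) • β - (inner ℝ α β : ℝ) • α)
          ((inner ℝ α α : ℝ) • β - (inner ℝ α β : ℝ) • α) : ℝ) = 0 := by
        simp only [inner_sub_left, inner_sub_right, real_inner_smul_left,
          real_inner_smul_right, real_inner_comm α β]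
        nlinarith [hc2]
      exact inner_self_eq_zero.1 this
    have hβα : β = ((inner ℝ α α : ℝ)⁻¹ * inner ℝ α β) • α := by
      have h1 : (inner ℝ α α : ℝ) • β = (inner ℝ α β : ℝ) • α := sub_eq_zero.1 hw
      calc β = (inner ℝ α α : ℝ)⁻¹ • ((inner ℝ α α : ℝ) • β) := by
              rw [smul_smul, inv_mul_cancel₀ (ne_of_gt ha), one_smul]
        _ = (inner ℝ α α : ℝ)⁻¹ • ((inner ℝ α β : ℝ) • α) := by rw [h1]
        _ = ((inner ℝ α α : ℝ)⁻¹ * inner ℝ α β) • α := smul_smul _ _ _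
    have hline : β ∈ Rt.Φ ∩ {x : V | ∃ t : ℝ, x = t • α} := ⟨hβ, ⟨_, hβα⟩⟩
    rw [Rt.line α hα] at hline
    rcases hline with h | h
    · exact hne (h.symm)
    · rw [Set.mem_singleton_iff] at h
      rw [h, inner_neg_right] at hpos
      linarith
  · have hnm3 : n * m ≤ 3 := by omega
    have : n = 1 ∨ m = 1 := by
      by_contra hc
      push_neg at hc
      have h2 : 2 ≤ n := by omega
      have h3 : 2 ≤ m := by omega
      nlinarith
    rcases this with h1 | h1
    · have hr := Rt.reflect α hα β hβ
      rw [hn, h1] at hr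
      have : β - ((1:ℤ):ℝ) • α = β - α := by norm_num
      rw [this] at hr
      have := Rt.neg_mem hr
      rwa [neg_sub] at this
    · have hr := Rt.reflect β hβ α hα
      rw [real_inner_comm α β, hm, h1] at hr
      have : α - ((1:ℤ):ℝ) • β = α - β := by norm_num
      rwa [this] at hr

lemma fsum_nonneg (P : PosRootSys V) {M : Multiset V} (h : ∀ x ∈ M, 0 < P.f x) :
    0 ≤ P.f M.sum := by
  induction M using Multiset.induction with
  | empty => simp
  | cons a s ih =>
    rw [Multiset.sum_cons, map_add]
    have h1 : 0 < P.f a := h a (Multiset.mem_cons_self a s)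
    have h2 : 0 ≤ P.f s.sum := ih (fun x hx => h x (Multiset.mem_cons_of_mem hx))
    linarith

lemma fsum_pos (P : PosRootSys V) {M : Multiset V} (h : ∀ x ∈ M, 0 < P.f x)
    (hM : M ≠ 0) : 0 < P.f M.sum := by
  classical
  obtain ⟨a, ha⟩ := Multiset.exists_mem_of_ne_zero hM
  have := Multiset.cons_erase ha
  rw [← this, Multiset.sum_cons, map_add]
  have h1 : 0 < P.f a := h a ha
  have h2 : 0 ≤ P.f (M.erase a).sum :=
    fsum_nonneg P (fun x hx => h x (Multiset.mem_of_mem_erase hx))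
  linarith

lemma inner_msum_nonpos {γ : V} {M : Multiset V}
    (h : ∀ x ∈ M, (inner ℝ γ x : ℝ) ≤ 0) : (inner ℝ γ M.sum : ℝ) ≤ 0 := by
  induction M using Multiset.induction with
  | empty => simp
  | cons a s ih =>
    rw [Multiset.sum_cons, inner_add_right]
    have h1 := h a (Multiset.mem_cons_self a s)
    have h2 := ih (fun x hx => h x (Multiset.mem_cons_of_mem hx))
    linarith

/-- Peel one root off a multiset of positive roots summing to a root. -/
lemma exists_peel [DecidableEq V] (P : PosRootSys V) (hcr : P.toRootSys.IsCrystallographic)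
    {T₀ : Set V} (hT₀ : T₀ ⊆ P.Pos)
    {γ : V} (hγ : γ ∈ P.Φ) {M : Multiset V}
    (hM : ∀ x ∈ M, x ∈ T₀) (hsum : M.sum = γ) (hcard : 2 ≤ Multiset.card M) :
    ∃ β ∈ M, β ∈ T₀ ∧ γ - β ∈ P.Φ ∧ (M.erase β).sum = γ - β := by
  classical
  have hpos : ∀ x ∈ M, x ∈ P.Pos := fun x hx => hT₀ (hM x hx)
  -- there is β ∈ M with ⟪γ, β⟫ > 0
  have hγ0 : γ ≠ 0 := P.nonzero γ hγ
  have hip : 0 < (inner ℝ γ γ : ℝ) :=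
    lt_of_le_of_ne real_inner_self_nonneg (Ne.symm (inner_self_ne_zero.2 hγ0))
  have hex : ∃ β ∈ M, 0 < (inner ℝ γ β : ℝ) := by
    by_contra hc
    push_neg at hc
    have := inner_msum_nonpos (M := M) (γ := γ) hc
    rw [hsum] at this
    linarith
  obtain ⟨β, hβM, hβip⟩ := hex
  have hβpos := hpos β hβM
  have herase : (M.erase β).sum = γ - β := by
    have hc := Multiset.cons_erase hβM
    have : (β ::ₘ M.erase β).sum = γ := by rw [hc, hsum]
    rw [Multiset.sum_cons] at this
    exact eq_sub_of_add_eq' this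
  have hne : γ ≠ β := by
    intro hgb
    have h0 : (M.erase β).sum = 0 := by rw [herase, hgb, sub_self]
    have hcard' : M.erase β ≠ 0 := by
      intro hz
      have := Multiset.card_erase_of_mem hβM
      rw [hz] at this
      simp at this
      omega
    have := fsum_pos P (fun x hx => (hpos x (Multiset.mem_of_mem_erase hx)).2) hcard'
    rw [h0, map_zero] at this
    exact lt_irrefl _ this
  have hsub : γ - β ∈ P.Φ := P.toRootSys.sub_mem hcr hγ hβpos.1 hβip hne
  exact ⟨β, hβM, hM β hβM, hsub, herase⟩

lemma clos_pos (P : PosRootSys V) {A : Set V} (hA : A ⊆ P.Pos) {γ : V}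
    (hγ : γ ∈ P.toRootSys.clos A) : 0 < P.f γ := by
  obtain ⟨hγΦ, M, hMA, hMsum⟩ := hγ
  have hM0 : M ≠ 0 := by
    intro h
    rw [h] at hMsum
    exact P.nonzero γ hγΦ (by simpa using hMsum.symm)
  have := fsum_pos P (fun x hx => (hA (hMA x hx)).2) hM0
  rwa [hMsum] at this

lemma meet_antisym (P : PosRootSys V) (hcr : P.toRootSys.IsCrystallographic)
    (R S : Set V) (hR : P.toRootSys.IsPoset R) (hS : P.toRootSys.IsPoset S) :
    IsAntisymSet (P.wmeet R S) := by
  classical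
  set A : Set V := (R ∪ S) ∩ P.Pos with hAdef
  have hApos : A ⊆ P.Pos := Set.inter_subset_right
  set T : Set V := P.toRootSys.clos A ∪ ((R ∩ S) ∩ P.Neg) with hTdef
  have hTΦ : T ⊆ P.Φ := by
    rintro x (hx | hx)
    · exact hx.1
    · exact hx.2.1
  -- main claim: the negative one of a ± pair in ncd T gets deleted
  have claim : ∀ α, α ∈ P.wmeet R S → -α ∈ P.wmeet R S → P.f α < 0 → False := by
    intro α hα hnα hfα
    obtain ⟨hαT, hαnb⟩ := hα
    obtain ⟨hnαT, _⟩ := hnα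
    have hαΦ : α ∈ P.Φ := hTΦ hαT
    -- α is in the negative part of T
    have hαRS : α ∈ (R ∩ S) ∩ P.Neg := by
      rcases hαT with h | h
      · exact absurd (clos_pos P hApos h) (by linarith)
      · exact h
    -- -α is in the closure part
    have hnαclos : -α ∈ P.toRootSys.clos A := by
      rcases hnαT with h | h
      · exact h
      · exfalso
        have : P.f (-α) < 0 := h.2.2
        rw [map_neg] at this
        linarith
    obtain ⟨hnαΦ, M, hMA, hMsum⟩ := hnαclos
    -- case on the size of M
    rcases Nat.lt_or_ge (Multiset.card M) 2 with hcard | hcard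
    · interval_cases h : Multiset.card M
      · rw [Multiset.card_eq_zero] at h
        rw [h] at hMsum
        exact P.nonzero _ hnαΦ (by simpa using hMsum.symm)
      · obtain ⟨β, hβ⟩ := Multiset.card_eq_one.1 h
        rw [hβ] at hMsum hMA
        simp only [Multiset.sum_singleton] at hMsum
        have hβA : β ∈ A := hMA β (by simp)
        rw [hMsum] at hβA
        rcases hβA.1 with h' | h'
        · exact hR.2.1 α hαRS.1.1 h'
        · exact hS.2.1 α hαRS.1.2 h'
    · obtain ⟨β, hβM, hβA, hsubΦ, herase⟩ :=
        exists_peel P hcr hApos hnαΦ hMA hMsum hcard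
      set δ : V := -α - β with hδdef
      have hδclos : δ ∈ P.toRootSys.clos A :=
        ⟨hsubΦ, M.erase β, fun x hx => hMA x (Multiset.mem_of_mem_erase hx), herase⟩
      have hδf : 0 < P.f δ := clos_pos P hApos hδclos
      have hβPos : β ∈ P.Pos := hApos hβA
      -- show α is in the deleted set: contradiction with hαnb
      apply hαnb
      refine ⟨⟨hαT, hαΦ, hfα⟩, {δ}, ?_, ?_⟩
      · intro x hx
        simp only [Finset.coe_singleton, Set.mem_singleton_iff] at hx
        subst hx
        exact ⟨Or.inl hδclos, hsubΦ, hδf⟩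
      · rw [Finset.sum_singleton, id]
        have heq : α + δ = -β := by rw [hδdef]; abel
        rw [heq]
        refine ⟨P.toRootSys.neg_mem hβPos.1, ?_⟩
        rintro (h | h)
        · have := clos_pos P hApos h
          rw [map_neg] at this
          linarith [hβPos.2]
        · rcases hβA.1 with h' | h'
          · exact hR.2.1 β h' h.1.1
          · exact hS.2.1 β h' h.1.2
  intro α hα hnα
  have hαΦ : α ∈ P.Φ := hTΦ hα.1
  rcases lt_or_gt_of_ne (P.generic α hαΦ) with h | h
  · exact claim α hα hnα h
  · refine claim (-α) hnα (by rwa [neg_neg]) ?_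
    rw [map_neg]; linarith

/-- The same positive root system with negated functional. -/
def PosRootSys.negf (P : PosRootSys V) : PosRootSys V :=
  { P.toRootSys with
    f := -P.f
    generic := fun α hα => by
      simp only [LinearMap.neg_apply, ne_eq, neg_eq_zero]
      exact P.generic α hα }

lemma negf_toRootSys (P : PosRootSys V) : P.negf.toRootSys = P.toRootSys := rfl

lemma negf_Pos (P : PosRootSys V) : P.negf.Pos = P.Neg := by
  ext x
  simp only [PosRootSys.Pos, PosRootSys.Neg, PosRootSys.negf, Set.mem_setOf_eq,
    LinearMap.neg_apply]
  constructor
  · rintro ⟨h1, h2⟩; exact ⟨h1, by linarith⟩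
  · rintro ⟨h1, h2⟩; exact ⟨h1, by linarith⟩

lemma negf_Neg (P : PosRootSys V) : P.negf.Neg = P.Pos := by
  ext x
  simp only [PosRootSys.Pos, PosRootSys.Neg, PosRootSys.negf, Set.mem_setOf_eq,
    LinearMap.neg_apply]
  constructor
  · rintro ⟨h1, h2⟩; exact ⟨h1, by linarith⟩
  · rintro ⟨h1, h2⟩; exact ⟨h1, by linarith⟩

lemma negf_ncd (P : PosRootSys V) (S : Set V) : P.negf.ncd S = P.pcd S := by
  unfold PosRootSys.ncd PosRootSys.pcd
  rw [negf_Pos, negf_Neg]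
  rfl

lemma wjoin_eq (P : PosRootSys V) (R S : Set V) :
    P.wjoin R S = P.negf.wmeet R S := by
  unfold PosRootSys.wjoin PosRootSys.wmeet
  rw [negf_ncd, negf_Pos, negf_Neg, negf_toRootSys, Set.union_comm]

theorem stmt14 (P : PosRootSys V) (hcr : P.toRootSys.IsCrystallographic)
    (R S : Set V) (hR : P.toRootSys.IsPoset R) (hS : P.toRootSys.IsPoset S) :
    IsAntisymSet (P.wmeet R S) ∧ IsAntisymSet (P.wjoin R S) := by
  refine ⟨meet_antisym P hcr R S hR hS, ?_⟩
  rw [wjoin_eq]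
  exact meet_antisym P.negf hcr R S hR hS
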